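/- Let V be a finite-dimensional real inner product space, W a finite-dimensional real vector space, and c : V → End(W) a linear map satisfying the Clifford relation c(v) ∘ c(v) = -‖v‖² · id_W for all v ∈ V. Let X : ℝ → V be twice differentiable at t ∈ ℝ, write A(s) = c(X(s)), let A''(t) denote the second derivative of A at t, and let g(s) = ‖X(s)‖². Then tr(A(t) ∘ A''(t)) = ( -(1/2) g''(t) + ‖X'(t)‖² ) · tr(id_W), where tr denotes the trace of endomorphisms of W. (This is item (3) of Lemma 3.7 of the paper: tr[c(X) ∂_{x_j}∂_{x_j}[c(X)]] = ((1/2)|X|⁴ ∂²_{x_j}(|X|⁻²) - |X|⁶ (∂_{x_j}(|X|⁻²))² + |∇_{e_j}X|²) tr[id], stated along one coordinate direction.) -/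

import Mathlib

open ContinuousLinearMap

/-- Lemma 3.7(3): if `c : V → End(W)` is linear with `c(v)² = -‖v‖² id`, `X : ℝ → V`
is twice differentiable at `t`, `A(s) = c(X(s))` and `g(s) = ‖X(s)‖²`, then
`tr(A(t) ∘ A''(t)) = (-(1/2) g''(t) + ‖X'(t)‖²) · tr(id_W)`. -/
theorem trace_clifford_comp_secondDerivClifford
    {V W : Type*} [NormedAddCommGroup V] [InnerProductSpace ℝ V]
    [FiniteDimensional ℝ V]
    [NormedAddCommGroup W] [NormedSpace ℝ W] [FiniteDimensional ℝ W]
    (c : V →ₗ[ℝ] (W →L[ℝ] W))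
    (hc : ∀ v : V, (c v).comp (c v) = -‖v‖ ^ 2 • ContinuousLinearMap.id ℝ W)
    (X : ℝ → V) (t : ℝ)
    (hX : ∀ᶠ s in nhds t, DifferentiableAt ℝ X s)
    (hX' : DifferentiableAt ℝ (deriv X) t)
    (A : ℝ → (W →L[ℝ] W)) (hA : A = fun s => c (X s))
    (g : ℝ → ℝ) (hg : g = fun s => ‖X s‖ ^ 2) :
    LinearMap.trace ℝ W ((A t).comp (deriv (deriv A) t)).toLinearMap
      = (-(1 / 2) * deriv (deriv g) t + ‖deriv X t‖ ^ 2) *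
        LinearMap.trace ℝ W (LinearMap.id : W →ₗ[ℝ] W) := by
  set L : V →L[ℝ] (W →L[ℝ] W) := LinearMap.toContinuousLinearMap c with hL
  have hLc : ∀ v, L v = c v := fun v => rfl
  -- trace identity
  have key : ∀ v w : V, LinearMap.trace ℝ W ((c v).comp (c w)).toLinearMap
      = -((inner ℝ v w : ℝ)) * LinearMap.trace ℝ W (LinearMap.id : W →ₗ[ℝ] W) := by
    intro v w
    have h1 := hc (v + w)
    have h2 := hc v
    have h3 := hc w
    rw [map_add] at h1
    have hpol : (c v).comp (c w) + (c w).comp (c v)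
        = (-(2 * (inner ℝ v w : ℝ))) • ContinuousLinearMap.id ℝ W := by
      have expand : ((c v + c w).comp (c v + c w))
          = (c v).comp (c v) + ((c v).comp (c w) + (c w).comp (c v)) + (c w).comp (c w) := by
        simp [ContinuousLinearMap.add_comp, ContinuousLinearMap.comp_add]; abel
      rw [expand, h2, h3] at h1
      have : (c v).comp (c w) + (c w).comp (c v)
          = -‖v + w‖ ^ 2 • ContinuousLinearMap.id ℝ W
            - (-‖v‖ ^ 2 • ContinuousLinearMap.id ℝ W) - (-‖w‖ ^ 2 • ContinuousLinearMap.id ℝ W) := by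
        rw [← h1]; abel
      rw [this, norm_add_sq_real]
      rw [← sub_smul, ← sub_smul]
      congr 1
      ring
    have htr := congrArg (fun f : W →L[ℝ] W => LinearMap.trace ℝ W f.toLinearMap) hpol
    simp only [ContinuousLinearMap.coe_add, ContinuousLinearMap.coe_smul, map_add, map_smul,
      ContinuousLinearMap.toLinearMap_comp] at htr
    have hcomm : LinearMap.trace ℝ W ((c w).toLinearMap.comp (c v).toLinearMap)
        = LinearMap.trace ℝ W ((c v).toLinearMap.comp (c w).toLinearMap) := by
      simpa [Module.End.mul_eq_comp] using LinearMap.trace_mul_comm ℝ (c w).toLinearMap (c v).toLinearMap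
    rw [hcomm] at htr
    have hid : (ContinuousLinearMap.id ℝ W : W →ₗ[ℝ] W) = LinearMap.id := rfl
    rw [hid] at htr
    have : (2 : ℝ) * LinearMap.trace ℝ W ((c v).toLinearMap.comp (c w).toLinearMap)
        = -(2 * (inner ℝ v w : ℝ)) * LinearMap.trace ℝ W (LinearMap.id : W →ₗ[ℝ] W) := by
      rw [two_mul]; rw [htr]; simp [smul_eq_mul]
    have := congrArg (fun x => (1/2 : ℝ) * x) this
    rw [ContinuousLinearMap.toLinearMap_comp]
    linarith [this]
  -- second derivative of A
  have hA'' : deriv (deriv A) t = c (deriv (deriv X) t) := by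
    have hev : deriv A =ᶠ[nhds t] fun s => L (deriv X s) := by
      filter_upwards [hX] with s hs
      have : HasDerivAt A (L (deriv X s)) s := by
        rw [hA]
        exact (L.hasFDerivAt.comp_hasDerivAt s hs.hasDerivAt)
      exact this.deriv
    rw [hev.deriv_eq]
    have : HasDerivAt (fun s => L (deriv X s)) (L (deriv (deriv X) t)) t :=
      L.hasFDerivAt.comp_hasDerivAt t hX'.hasDerivAt
    exact this.deriv
  -- second derivative of g
  have hg'' : deriv (deriv g) t
      = 2 * ((inner ℝ (X t) (deriv (deriv X) t) : ℝ) + ‖deriv X t‖ ^ 2) := by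
    have hev : deriv g =ᶠ[nhds t] fun s => 2 * (inner ℝ (X s) (deriv X s) : ℝ) := by
      filter_upwards [hX] with s hs
      have : HasDerivAt g ((inner ℝ (X s) (deriv X s) : ℝ) + (inner ℝ (deriv X s) (X s) : ℝ)) s := by
        rw [hg]
        have := (hs.hasDerivAt.inner ℝ hs.hasDerivAt)
        simpa [real_inner_self_eq_norm_sq] using this.congr_deriv rfl
      rw [this.deriv, real_inner_comm (deriv X s) (X s)]; ring
    rw [hev.deriv_eq]
    have hXt : DifferentiableAt ℝ X t := hX.self_of_nhds
    have h2 : HasDerivAt (fun s => (inner ℝ (X s) (deriv X s) : ℝ))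
        ((inner ℝ (X t) (deriv (deriv X) t) : ℝ) + (inner ℝ (deriv X t) (deriv X t) : ℝ)) t :=
      hXt.hasDerivAt.inner ℝ hX'.hasDerivAt
    have : HasDerivAt (fun s => 2 * (inner ℝ (X s) (deriv X s) : ℝ))
        (2 * ((inner ℝ (X t) (deriv (deriv X) t) : ℝ) + (inner ℝ (deriv X t) (deriv X t) : ℝ))) t := by
      simpa using h2.const_mul (2 : ℝ)
    rw [this.deriv, real_inner_self_eq_norm_sq]
  rw [hA'', hA]
  rw [key (X t) (deriv (deriv X) t), hg'']
  ring
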